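/- arXiv:2003.12169 — 5 statements merged into one kernel-verified Lean document; each statement's English description precedes it below -/
import Mathlib

section
/- Let G be a finite simple graph on vertex set V, let d : V → C be a stable coloring of G, let c₀ : V → A be any initial coloring that factors through d (i.e., there exists h : C → A with c₀ = h ∘ d), and let f : ℕ → A → Multiset A → A be any sequence of update functions, with iterated message-passing colorings c_{t+1}(v) = f_t(c_t(v), M_{c_t}(v)). Then for every t ∈ ℕ and all vertices u, v ∈ V, d(u) = d(v) implies c_t(u) = c_t(v). (In other words, no iterated message-passing computation, and hence no WL-GNN, can distinguish two vertices identified by a stable coloring through which its input features factor.) -/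
/-- The multiset of `c`-values of the neighbors of `v` in `G`. -/
def nbrMultiset {V A : Type*} [Fintype V] (G : SimpleGraph V) [DecidableRel G.Adj]
    (c : V → A) (v : V) : Multiset A :=
  (G.neighborFinset v).val.map c

/-- Iterated message-passing colorings: `c_{t+1}(v) = f_t (c_t v) (M_{c_t} v)`. -/
def iterColor {V A : Type*} [Fintype V] (G : SimpleGraph V) [DecidableRel G.Adj]
    (c₀ : V → A) (f : ℕ → A → Multiset A → A) : ℕ → V → A
  | 0 => c₀
  | (t + 1) => fun v =>
      f t (iterColor G c₀ f t v) (nbrMultiset G (iterColor G c₀ f t) v)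

/-- No iterated message-passing computation can distinguish two vertices identified by a
stable coloring through which its input features factor. -/
theorem stmt0 {V C A : Type*} [Fintype V] (G : SimpleGraph V) [DecidableRel G.Adj]
    (d : V → C)
    (hstable : ∀ u v : V, d u = d v → nbrMultiset G d u = nbrMultiset G d v)
    (c₀ : V → A) (hfac : ∃ h : C → A, c₀ = h ∘ d)
    (f : ℕ → A → Multiset A → A) :
    ∀ (t : ℕ) (u v : V), d u = d v → iterColor G c₀ f t u = iterColor G c₀ f t v := by
  obtain ⟨h0, hc0⟩ := hfac
  intro t
  induction t with
  | zero =>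
    intro u v huv
    show c₀ u = c₀ v
    rw [hc0]; simp [huv]
  | succ t ih =>
    intro u v huv
    classical
    set g : C → A := fun x => if hx : ∃ w, d w = x then iterColor G c₀ f t hx.choose else h0 x
      with hg
    have key : ∀ w, iterColor G c₀ f t w = g (d w) := by
      intro w
      have hx : ∃ w', d w' = d w := ⟨w, rfl⟩
      rw [hg]
      simp only [dif_pos hx]
      exact ih w hx.choose hx.choose_spec.symm
    have hm : ∀ x, nbrMultiset G (iterColor G c₀ f t) x = (nbrMultiset G d x).map g := by
      intro x
      simp only [nbrMultiset, Multiset.map_map]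
      exact Multiset.map_congr rfl (fun w _ => key w)
    show f t _ _ = f t _ _
    rw [key u, key v, huv, hm u, hm v, hstable u v huv]
end

section
/- Let G be a finite simple graph on vertex set V, let d : V → C be a stable coloring of G, let c₀ : V → A factor through d, let f : ℕ → A → Multiset A → A be update functions with iterated message-passing colorings c_t, and fix T ∈ ℕ. For any function g : A → B, define the augmented initial coloring c₀'(v) = (c₀(v), g(c_T(v))) ∈ A × B, and let c'_t be the iterated message-passing colorings obtained from c₀' under any further sequence of update functions f' : ℕ → (A × B) → Multiset (A × B) → (A × B). Then for every t ∈ ℕ and all u, v ∈ V, d(u) = d(v) implies c'_t(u) = c'_t(v). (This is the formal core of Corollary 1: feeding back predicted labels obtained as a deterministic pointwise function of the current representation does not increase the distinguishing power of message passing beyond that of a stable coloring.) -/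
open Classical in
lemma iterColor_factors {V C A : Type*} [Fintype V] (G : SimpleGraph V) [DecidableRel G.Adj]
    (d : V → C)
    (hstable : ∀ u v : V, d u = d v → nbrMultiset G d u = nbrMultiset G d v)
    (c₀ : V → A) (hfac : ∃ h : C → A, c₀ = h ∘ d)
    (f : ℕ → A → Multiset A → A) :
    ∀ t : ℕ, ∃ h : C → A, iterColor G c₀ f t = h ∘ d := by
  -- μ assigns to each color its fiber's neighbor multiset
  have hμ : ∃ μ : C → Multiset C, ∀ v, μ (d v) = nbrMultiset G d v := by
    refine ⟨fun x => if hx : ∃ w, d w = x then nbrMultiset G d hx.choose else 0, fun v => ?_⟩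
    have hx : ∃ w, d w = d v := ⟨v, rfl⟩
    simp only [dif_pos hx]
    exact hstable _ _ hx.choose_spec
  obtain ⟨μ, hμ⟩ := hμ
  intro t
  induction t with
  | zero => exact hfac
  | succ t ih =>
      obtain ⟨h, hh⟩ := ih
      refine ⟨fun x => f t (h x) ((μ x).map h), ?_⟩
      funext v
      have hn : nbrMultiset G (iterColor G c₀ f t) v = (nbrMultiset G d v).map h := by
        simp [nbrMultiset, hh, Multiset.map_map, Function.comp]
      simp only [iterColor, hn, ← hμ v]
      rw [congrFun hh v]
      simp [nbrMultiset, Multiset.map_map]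

/-- Feeding back predicted labels obtained as a deterministic pointwise function of the current
representation does not increase the distinguishing power of message passing beyond a
stable coloring. -/
theorem stmt1 {V C A B : Type*} [Fintype V] (G : SimpleGraph V) [DecidableRel G.Adj]
    (d : V → C)
    (hstable : ∀ u v : V, d u = d v → nbrMultiset G d u = nbrMultiset G d v)
    (c₀ : V → A) (hfac : ∃ h : C → A, c₀ = h ∘ d)
    (f : ℕ → A → Multiset A → A) (T : ℕ)
    (g : A → B)
    (f' : ℕ → (A × B) → Multiset (A × B) → (A × B)) :
    ∀ (t : ℕ) (u v : V), d u = d v →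
      iterColor G (fun w => (c₀ w, g (iterColor G c₀ f T w))) f' t u =
      iterColor G (fun w => (c₀ w, g (iterColor G c₀ f T w))) f' t v := by
  obtain ⟨h, hh⟩ := hfac
  obtain ⟨hT, hhT⟩ := iterColor_factors G d hstable c₀ ⟨h, hh⟩ f T
  have hfac' : ∃ h' : C → A × B,
      (fun w => (c₀ w, g (iterColor G c₀ f T w))) = h' ∘ d := by
    refine ⟨fun x => (h x, g (hT x)), ?_⟩
    funext w
    rw [congrFun hhT w, congrFun hh w]
    rfl
  intro t u v huv
  obtain ⟨h', hh'⟩ := iterColor_factors G d hstable _ hfac' f' t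
  simp [hh', huv]
end

section
/- Let G₁ and G₂ be finite simple graphs on vertex sets V₁ and V₂ with initial colorings x₁ : V₁ → A and x₂ : V₂ → A, let f : ℕ → A → Multiset A → A be a shared sequence of update functions with iterated message-passing colorings c_t^{G₁} and c_t^{G₂}, and fix t ∈ ℕ, v₁ ∈ V₁, v₂ ∈ V₂. Suppose φ is a bijection from the closed t-ball B_t(v₁) in G₁ onto the closed t-ball B_t(v₂) in G₂ such that φ(v₁) = v₂, x₂(φ(u)) = x₁(u) for all u ∈ B_t(v₁), and for all u, w ∈ B_t(v₁), u is adjacent to w in G₁ if and only if φ(u) is adjacent to φ(w) in G₂. Then c_t^{G₁}(v₁) = c_t^{G₂}(v₂). (A t-layer message-passing representation of a node is determined by the isomorphism type of its t-hop egonet with its features.) -/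
/-- The closed `t`-ball around `v` in `G`: vertices reachable from `v` by a walk of
length at most `t`. -/
def ball {V : Type*} (G : SimpleGraph V) (v : V) (t : ℕ) : Set V :=
  {u | ∃ w : G.Walk v u, w.length ≤ t}

/-- A `t`-layer message-passing representation of a node is determined by the isomorphism
type of its `t`-hop egonet together with its features. -/
theorem stmt7 {V₁ V₂ A : Type*} [Fintype V₁] [Fintype V₂]
    (G₁ : SimpleGraph V₁) [DecidableRel G₁.Adj]
    (G₂ : SimpleGraph V₂) [DecidableRel G₂.Adj]
    (x₁ : V₁ → A) (x₂ : V₂ → A) (f : ℕ → A → Multiset A → A)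
    (t : ℕ) (v₁ : V₁) (v₂ : V₂)
    (φ : ball G₁ v₁ t → ball G₂ v₂ t)
    (hbij : Function.Bijective φ)
    (hv : (φ ⟨v₁, ⟨SimpleGraph.Walk.nil, Nat.zero_le t⟩⟩ : V₂) = v₂)
    (hx : ∀ u : ball G₁ v₁ t, x₂ (φ u : V₂) = x₁ (u : V₁))
    (hadj : ∀ u w : ball G₁ v₁ t,
      G₁.Adj (u : V₁) (w : V₁) ↔ G₂.Adj (φ u : V₂) (φ w : V₂)) :
    iterColor G₁ x₁ f t v₁ = iterColor G₂ x₂ f t v₂ := by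
  classical
  set Φ : V₁ → V₂ := fun u =>
    if h : u ∈ ball G₁ v₁ t then (φ ⟨u, h⟩ : V₂) else v₂ with hΦdef
  have hΦ : ∀ (u : V₁) (h : u ∈ ball G₁ v₁ t), Φ u = (φ ⟨u, h⟩ : V₂) := by
    intro u h; simp [hΦdef, h]
  -- basic ball facts
  have hmono : ∀ k k', k ≤ k' → ball G₁ v₁ k ⊆ ball G₁ v₁ k' := by
    rintro k k' hkk' u ⟨w, hw⟩; exact ⟨w, hw.trans hkk'⟩
  have hmono₂ : ∀ k k', k ≤ k' → ball G₂ v₂ k ⊆ ball G₂ v₂ k' := by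
    rintro k k' hkk' u ⟨w, hw⟩; exact ⟨w, hw.trans hkk'⟩
  have hadjball : ∀ {u w : V₁} {k : ℕ}, u ∈ ball G₁ v₁ k → G₁.Adj u w →
      w ∈ ball G₁ v₁ (k + 1) := by
    rintro u w k ⟨p, hp⟩ h
    exact ⟨p.concat h, by rw [SimpleGraph.Walk.length_concat]; omega⟩
  -- Φ maps k-balls to k-balls
  have hrev : ∀ (a u : V₁) (w : G₁.Walk a u), v₁ = a → w.length ≤ t →
      Φ u ∈ ball G₂ v₂ w.length := by
    intro a u w
    induction w using SimpleGraph.Walk.concatRec with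
    | Hnil =>
      rintro rfl _
      rw [hΦ v₁ ⟨SimpleGraph.Walk.nil, Nat.zero_le t⟩, hv]
      exact ⟨SimpleGraph.Walk.nil, le_refl _⟩
    | @Hconcat a' b c p hbc ih =>
      rintro rfl hlen
      rw [SimpleGraph.Walk.length_concat] at hlen ⊢
      have hib := ih rfl (by omega)
      have hbB : b ∈ ball G₁ v₁ t := ⟨p, by omega⟩
      have hcB : c ∈ ball G₁ v₁ t :=
        ⟨p.concat hbc, by rw [SimpleGraph.Walk.length_concat]; omega⟩
      have hA : G₂.Adj (Φ b) (Φ c) := by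
        rw [hΦ b hbB, hΦ c hcB]
        exact (hadj ⟨b, hbB⟩ ⟨c, hcB⟩).1 hbc
      obtain ⟨q, hq⟩ := hib
      exact ⟨q.concat hA, by rw [SimpleGraph.Walk.length_concat]; omega⟩
  have hΦball : ∀ {u : V₁} {k : ℕ}, k ≤ t → u ∈ ball G₁ v₁ k →
      Φ u ∈ ball G₂ v₂ k := by
    rintro u k hk ⟨w, hw⟩
    obtain ⟨q, hq⟩ := hrev v₁ u w rfl (by omega)
    exact ⟨q, by omega⟩
  -- main induction
  have key : ∀ s : ℕ, s ≤ t → ∀ u : V₁, u ∈ ball G₁ v₁ (t - s) →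
      iterColor G₁ x₁ f s u = iterColor G₂ x₂ f s (Φ u) := by
    intro s
    induction s with
    | zero =>
      intro _ u hu
      have hu' : u ∈ ball G₁ v₁ t := hmono _ _ (by omega) hu
      rw [hΦ u hu']
      exact (hx ⟨u, hu'⟩).symm
    | succ s ih =>
      intro hst u hu
      have hu' : u ∈ ball G₁ v₁ (t - s) := hmono _ _ (by omega) hu
      have huT : u ∈ ball G₁ v₁ t := hmono _ _ (by omega) hu
      have hnbr : ∀ w : V₁, G₁.Adj u w → w ∈ ball G₁ v₁ (t - s) := by
        intro w hw
        have := hadjball hu hw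
        exact hmono _ _ (by omega) this
      -- neighbor finset correspondence
      have himg : G₂.neighborFinset (Φ u) = (G₁.neighborFinset u).image Φ := by
        ext n
        simp only [SimpleGraph.mem_neighborFinset, Finset.mem_image]
        constructor
        · intro hA
          have hΦu : Φ u ∈ ball G₂ v₂ (t - (s + 1)) := hΦball (by omega) hu
          obtain ⟨q, hq⟩ := hΦu
          have hnB : n ∈ ball G₂ v₂ t :=
            ⟨q.concat hA, by rw [SimpleGraph.Walk.length_concat]; omega⟩
          obtain ⟨⟨w, hwB⟩, hwn⟩ := hbij.2 ⟨n, hnB⟩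
          have hΦw : Φ w = n := by
            rw [hΦ w hwB, hwn]
          refine ⟨w, ?_, hΦw⟩
          have := (hadj ⟨u, huT⟩ ⟨w, hwB⟩).2 (by rw [← hΦ u huT, ← hΦ w hwB, hΦw]; exact hA)
          exact this
        · rintro ⟨w, hw, rfl⟩
          have hwB : w ∈ ball G₁ v₁ t := hmono _ _ (by omega) (hnbr w hw)
          rw [hΦ u huT, hΦ w hwB]
          exact (hadj ⟨u, huT⟩ ⟨w, hwB⟩).1 hw
      have hinj : Set.InjOn Φ (G₁.neighborFinset u : Set V₁) := by
        intro a ha b hb hab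
        simp only [Finset.coe_sort_coe, Finset.mem_coe,
          SimpleGraph.mem_neighborFinset] at ha hb
        have haB : a ∈ ball G₁ v₁ t := hmono _ _ (by omega) (hnbr a ha)
        have hbB : b ∈ ball G₁ v₁ t := hmono _ _ (by omega) (hnbr b hb)
        rw [hΦ a haB, hΦ b hbB] at hab
        have := hbij.1 (Subtype.ext hab)
        exact congrArg Subtype.val this
      have hval : ((G₁.neighborFinset u).image Φ).val
          = (G₁.neighborFinset u).val.map Φ :=
        Finset.image_val_of_injOn hinj
      have hms : nbrMultiset G₁ (iterColor G₁ x₁ f s) u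
          = nbrMultiset G₂ (iterColor G₂ x₂ f s) (Φ u) := by
        unfold nbrMultiset
        rw [himg, hval, Multiset.map_map]
        refine (Multiset.map_congr rfl ?_).symm
        intro w hw
        have hw' : G₁.Adj u w := by
          simpa [SimpleGraph.mem_neighborFinset] using hw
        exact (ih (by omega) w (hnbr w hw')).symm
      show f s _ _ = f s _ _
      rw [ih (by omega) u hu', hms]
  have := key t (le_refl t) v₁ ⟨SimpleGraph.Walk.nil, Nat.zero_le _⟩
  rw [this, hΦ v₁ ⟨SimpleGraph.Walk.nil, Nat.zero_le t⟩, hv]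
end

section
/- Let G be a finite simple graph on vertex set V with initial coloring x : V → A, let f : ℕ → A → Multiset A → A be update functions with iterated message-passing colorings c_t, let d ∈ ℕ, and let v₁, v₂ ∈ V. Suppose the d-hop egonets of v₁ and v₂ are isomorphic respecting features: there is a bijection φ from the closed d-ball B_d(v₁) onto the closed d-ball B_d(v₂) with φ(v₁) = v₂, x(φ(u)) = x(u) for all u ∈ B_d(v₁), and u adjacent to w in G if and only if φ(u) adjacent to φ(w) in G, for all u, w ∈ B_d(v₁). Then c_d(v₁) = c_d(v₂). (This is the first claim of Proposition 2: a message-passing (WL-)GNN with d layers generates identical representations for two nodes whose d-hop egonets are isomorphic.) -/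
lemma ball_mono {V : Type*} (G : SimpleGraph V) (v : V) {k l : ℕ} (h : k ≤ l) :
    ball G v k ⊆ ball G v l := fun _ ⟨w, hw⟩ => ⟨w, hw.trans h⟩

lemma ball_succ_of_adj {V : Type*} (G : SimpleGraph V) (v : V) {k : ℕ} {u w : V}
    (hu : u ∈ ball G v k) (h : G.Adj u w) : w ∈ ball G v (k + 1) := by
  obtain ⟨p, hp⟩ := hu
  exact ⟨p.concat h, by rw [SimpleGraph.Walk.length_concat]; omega⟩

lemma ball_map {V : Type*} (G : SimpleGraph V) {v₁ v₂ : V} {d : ℕ}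
    (g : V → V) (hg1 : g v₁ = v₂)
    (hgadj : ∀ u w, u ∈ ball G v₁ d → w ∈ ball G v₁ d → G.Adj u w → G.Adj (g u) (g w)) :
    ∀ k, k ≤ d → ∀ u, u ∈ ball G v₁ k → g u ∈ ball G v₂ k := by
  intro k
  induction k with
  | zero =>
    intro _ u hu
    obtain ⟨w, hw⟩ := hu
    have h0 : v₁ = u := w.eq_of_length_eq_zero (Nat.le_zero.mp hw)
    subst h0
    rw [hg1]
    exact ⟨SimpleGraph.Walk.nil, le_refl 0⟩
  | succ k ih =>
    intro hk u hu
    obtain ⟨w, hw⟩ := hu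
    rcases Nat.eq_zero_or_pos w.length with h0 | hpos
    · have h0' : v₁ = u := w.eq_of_length_eq_zero h0
      subst h0'
      rw [hg1]
      exact ⟨SimpleGraph.Walk.nil, Nat.zero_le _⟩
    · have hnn : ¬ w.reverse.Nil := by
        rw [SimpleGraph.Walk.not_nil_iff_lt_length]
        simpa using hpos
      obtain ⟨y, ha, p, hrev⟩ := SimpleGraph.Walk.not_nil_iff.mp hnn
      have hlp : p.length ≤ k := by
        have := congrArg SimpleGraph.Walk.length hrev
        simp [SimpleGraph.Walk.length_reverse] at this
        omega
      have hy : y ∈ ball G v₁ k := ⟨p.reverse, by simpa using hlp⟩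
      have hyd : y ∈ ball G v₁ d := ball_mono G v₁ (le_trans (Nat.le_succ k) hk) hy
      have hud : u ∈ ball G v₁ d := ⟨w, hw.trans hk⟩
      have hgy : g y ∈ ball G v₂ k := ih (le_trans (Nat.le_succ k) hk) y hy
      exact ball_succ_of_adj G v₂ hgy (hgadj y u hyd hud ha.symm)

/-- A message-passing (WL-)GNN with `d` layers generates identical representations for two
nodes whose `d`-hop egonets are isomorphic (respecting features). -/
theorem stmt8 {V A : Type*} [Fintype V] (G : SimpleGraph V) [DecidableRel G.Adj]
    (x : V → A) (f : ℕ → A → Multiset A → A)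
    (d : ℕ) (v₁ v₂ : V)
    (φ : ball G v₁ d → ball G v₂ d)
    (hbij : Function.Bijective φ)
    (hv : (φ ⟨v₁, ⟨SimpleGraph.Walk.nil, Nat.zero_le d⟩⟩ : V) = v₂)
    (hx : ∀ u : ball G v₁ d, x (φ u : V) = x (u : V))
    (hadj : ∀ u w : ball G v₁ d,
      G.Adj (u : V) (w : V) ↔ G.Adj (φ u : V) (φ w : V)) :
    iterColor G x f d v₁ = iterColor G x f d v₂ := by
  classical
  set e : ball G v₁ d ≃ ball G v₂ d := Equiv.ofBijective φ hbij with he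
  set g : V → V := fun w => if h : w ∈ ball G v₁ d then (φ ⟨w, h⟩ : V) else w with hg
  set g' : V → V :=
    fun y => if h : y ∈ ball G v₂ d then ((e.symm ⟨y, h⟩ : ball G v₁ d) : V) else y with hg'
  have hgval : ∀ u (h : u ∈ ball G v₁ d), g u = (φ ⟨u, h⟩ : V) := by
    intro u h; simp [hg, h]
  have hg'val : ∀ y (h : y ∈ ball G v₂ d),
      g' y = ((e.symm ⟨y, h⟩ : ball G v₁ d) : V) := by
    intro y h; simp [hg', h]
  have hmem : ∀ u, u ∈ ball G v₁ d → g u ∈ ball G v₂ d := by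
    intro u h; rw [hgval u h]; exact (φ ⟨u, h⟩).2
  have hmem' : ∀ y, y ∈ ball G v₂ d → g' y ∈ ball G v₁ d := by
    intro y h; rw [hg'val y h]; exact (e.symm ⟨y, h⟩).2
  have hφe : ∀ u : ball G v₁ d, φ u = e u := fun u => rfl
  have hg'g : ∀ u, u ∈ ball G v₁ d → g' (g u) = u := by
    intro u h
    rw [hgval u h, hg'val _ (φ ⟨u, h⟩).2]
    have h2 : (⟨(φ ⟨u, h⟩ : V), (φ ⟨u, h⟩).2⟩ : ball G v₂ d) = e ⟨u, h⟩ := by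
      rw [← hφe]
    rw [h2, Equiv.symm_apply_apply]
  have hgg' : ∀ y, y ∈ ball G v₂ d → g (g' y) = y := by
    intro y h
    rw [hg'val y h, hgval _ (e.symm ⟨y, h⟩).2]
    have h2 : (⟨((e.symm ⟨y, h⟩ : ball G v₁ d) : V), (e.symm ⟨y, h⟩).2⟩ : ball G v₁ d)
        = e.symm ⟨y, h⟩ := rfl
    rw [h2, hφe, Equiv.apply_symm_apply]
  have hadjg : ∀ u w, u ∈ ball G v₁ d → w ∈ ball G v₁ d →
      (G.Adj u w ↔ G.Adj (g u) (g w)) := by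
    intro u w hu hw
    rw [hgval u hu, hgval w hw]
    exact hadj ⟨u, hu⟩ ⟨w, hw⟩
  have hg1 : g v₁ = v₂ := by
    rw [hgval v₁ ⟨SimpleGraph.Walk.nil, Nat.zero_le d⟩]
    exact hv
  have hg'1 : g' v₂ = v₁ := by
    have := hg'g v₁ ⟨SimpleGraph.Walk.nil, Nat.zero_le d⟩
    rwa [hg1] at this
  have hball : ∀ k, k ≤ d → ∀ u, u ∈ ball G v₁ k → g u ∈ ball G v₂ k := by
    refine ball_map G g hg1 ?_
    intro u w hu hw h
    exact (hadjg u w hu hw).mp h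
  have key : ∀ t, t ≤ d → ∀ u, u ∈ ball G v₁ (d - t) →
      iterColor G x f t u = iterColor G x f t (g u) := by
    intro t
    induction t with
    | zero =>
      intro _ u hu
      have hud : u ∈ ball G v₁ d := by simpa using hu
      show x u = x (g u)
      rw [hgval u hud, hx ⟨u, hud⟩]
    | succ t ih =>
      intro ht u hu
      have hud : u ∈ ball G v₁ d := ball_mono G v₁ (Nat.sub_le d (t + 1)) hu
      have hnbr : ∀ w, G.Adj u w → w ∈ ball G v₁ (d - t) := by
        intro w hw
        have h1 := ball_succ_of_adj G v₁ hu hw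
        have h2 : d - (t + 1) + 1 = d - t := by omega
        rwa [h2] at h1
      have hgu2 : g u ∈ ball G v₂ (d - (t + 1)) := hball _ (Nat.sub_le _ _) u hu
      have hNeq : G.neighborFinset (g u) = (G.neighborFinset u).image g := by
        ext y
        simp only [Finset.mem_image, SimpleGraph.mem_neighborFinset]
        constructor
        · intro hy
          have hy2 : y ∈ ball G v₂ (d - t) := by
            have h1 := ball_succ_of_adj G v₂ hgu2 hy
            have h2 : d - (t + 1) + 1 = d - t := by omega
            rwa [h2] at h1
          have hyd : y ∈ ball G v₂ d := ball_mono G v₂ (Nat.sub_le d t) hy2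
          refine ⟨g' y, ?_, hgg' y hyd⟩
          rw [hadjg u (g' y) hud (hmem' y hyd), hgg' y hyd]
          exact hy
        · rintro ⟨w, hw, rfl⟩
          have hwd : w ∈ ball G v₁ d := ball_mono G v₁ (Nat.sub_le d t) (hnbr w hw)
          exact (hadjg u w hud hwd).mp hw
      have hinj : Set.InjOn g (G.neighborFinset u : Set V) := by
        intro a ha b hb hab
        have had : a ∈ ball G v₁ d :=
          ball_mono G v₁ (Nat.sub_le d t) (hnbr a ((G.mem_neighborFinset u a).mp ha))
        have hbd : b ∈ ball G v₁ d :=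
          ball_mono G v₁ (Nat.sub_le d t) (hnbr b ((G.mem_neighborFinset u b).mp hb))
        have := congrArg g' hab
        rwa [hg'g a had, hg'g b hbd] at this
      have h1 : iterColor G x f t u = iterColor G x f t (g u) :=
        ih (by omega) u (ball_mono G v₁ (by omega) hu)
      have h2 : nbrMultiset G (iterColor G x f t) (g u)
          = nbrMultiset G (iterColor G x f t) u := by
        unfold nbrMultiset
        rw [hNeq, Finset.image_val_of_injOn hinj, Multiset.map_map]
        refine Multiset.map_congr rfl ?_
        intro w hw
        have hw' : G.Adj u w := (G.mem_neighborFinset u w).mp hw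
        exact (ih (by omega) w (hnbr w hw')).symm
      show f t (iterColor G x f t u) (nbrMultiset G (iterColor G x f t) u)
          = f t (iterColor G x f t (g u)) (nbrMultiset G (iterColor G x f t) (g u))
      rw [h1, h2]
  have := key d le_rfl v₁ ⟨SimpleGraph.Walk.nil, by simp⟩
  rwa [hg1] at this
end

section
/- Let G be a finite simple graph on vertex set V with initial coloring c₀ : V → A and update functions f : ℕ → A → Multiset A → A, and fix t ∈ ℕ and v ∈ V. Let H be the subgraph of G induced on the closed t-ball B_t(v), with initial coloring the restriction of c₀ to B_t(v) and the same update functions, where neighbor multisets are taken within H. Then the t-step iterated message-passing coloring of v computed in H equals the t-step iterated message-passing coloring of v computed in G. -/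
theorem stmt9_aux {V A : Type*} [Fintype V] (G : SimpleGraph V) [DecidableRel G.Adj]
    (c₀ : V → A) (f : ℕ → A → Multiset A → A) (t : ℕ) (v : V)
    [DecidablePred (· ∈ ball G v t)] [DecidableRel (G.induce (ball G v t)).Adj] :
    ∀ s, s ≤ t → ∀ u (h : u ∈ ball G v t), (∃ w : G.Walk v u, w.length ≤ t - s) →
      iterColor (G.induce (ball G v t)) (fun u => c₀ (u : V)) f s ⟨u, h⟩ =
        iterColor G c₀ f s u := by
  intro s
  induction s with
  | zero => intro _ u h _; rfl
  | succ s ih =>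
    intro hst u h hw
    obtain ⟨w, hwlen⟩ := hw
    have hst' : s ≤ t := Nat.le_of_succ_le hst
    have hnbr : ∀ x, G.Adj u x → ∃ p : G.Walk v x, p.length ≤ t - s := by
      intro x hx
      exact ⟨w.concat hx, by rw [SimpleGraph.Walk.length_concat]; omega⟩
    simp only [iterColor]
    congr 1
    · exact ih hst' u h ⟨w, by omega⟩
    · unfold nbrMultiset
      have hfin : G.neighborFinset u =
          ((G.induce (ball G v t)).neighborFinset ⟨u, h⟩).map
            ⟨Subtype.val, Subtype.val_injective⟩ := by
        ext x
        simp only [Finset.mem_map, SimpleGraph.mem_neighborFinset,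
          Function.Embedding.coeFn_mk]
        constructor
        · intro hx
          have hxball : x ∈ ball G v t := by
            obtain ⟨p, hp⟩ := hnbr x hx
            exact ⟨p, by omega⟩
          exact ⟨⟨x, hxball⟩, hx, rfl⟩
        · rintro ⟨⟨y, hy⟩, hadj, rfl⟩
          exact hadj
      rw [hfin, Finset.map_val, Multiset.map_map]
      apply Multiset.map_congr rfl
      intro x hx
      rw [Finset.mem_val, SimpleGraph.mem_neighborFinset] at hx
      have hadj : G.Adj u x.val := hx
      exact ih hst' x.val x.2 (hnbr x.val hadj)

/-- The `t`-step iterated message-passing coloring of `v` computed in the subgraph of `G`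
induced on the closed `t`-ball around `v` equals the one computed in `G`. -/
theorem stmt9 {V A : Type*} [Fintype V] (G : SimpleGraph V) [DecidableRel G.Adj]
    (c₀ : V → A) (f : ℕ → A → Multiset A → A) (t : ℕ) (v : V) :
    haveI : DecidablePred (· ∈ ball G v t) := Classical.decPred _
    haveI : DecidableRel (G.induce (ball G v t)).Adj := Classical.decRel _
    iterColor (G.induce (ball G v t)) (fun u => c₀ (u : V)) f t
        ⟨v, ⟨SimpleGraph.Walk.nil, Nat.zero_le t⟩⟩ =
      iterColor G c₀ f t v := by
  exact @stmt9_aux V A _ G _ c₀ f t v (Classical.decPred _) (Classical.decRel _)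
    t le_rfl v ⟨SimpleGraph.Walk.nil, Nat.zero_le t⟩ ⟨SimpleGraph.Walk.nil, by simp⟩
end
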